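/- Let d > 2, A_d = (1,…,1) ∈ ℤ^{1×d}, and 𝓜_d = { e_1 − e_k : 2 ≤ k ≤ d }. Then for every i ∈ ℕ, the diameter of the fiber graph 𝓕_{A_d,i}(𝓜_d) equals 2i: any two u, v ∈ 𝓕_{A_d,i} are at graph distance at most ‖u − v‖_1, and the maximum ℓ_1-distance between two elements of 𝓕_{A_d,i} is 2i, achieved and tight. -/

import Mathlib

/-- One step of the fiber walk on `F` using moves `±Mset`. -/
def stepRel (d : ℕ) (F Mset : Set (Fin d → ℤ)) (x y : Fin d → ℤ) : Prop :=
  x ∈ F ∧ y ∈ F ∧ (y - x ∈ Mset ∨ x - y ∈ Mset)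

/-- Graph distance in the fiber graph on `F` with moves `±Mset`. -/
noncomputable def walkDist (d : ℕ) (F Mset : Set (Fin d → ℤ)) (u v : Fin d → ℤ) : ℕ :=
  sInf {n : ℕ | ∃ f : ℕ → (Fin d → ℤ), f 0 = u ∧ f n = v ∧
    ∀ t < n, stepRel d F Mset (f t) (f (t + 1))}

/-- Diameter of the fiber graph on `F` with moves `±Mset`. -/
noncomputable def walkDiam (d : ℕ) (F Mset : Set (Fin d → ℤ)) : ℕ :=
  sSup {n : ℕ | ∃ u ∈ F, ∃ v ∈ F, n = walkDist d F Mset u v}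

namespace Stmt11Aux

lemma path_cons {d : ℕ} {F M : Set (Fin d → ℤ)} {x y v : Fin d → ℤ} {m : ℕ}
    (hxy : stepRel d F M x y)
    (hf : ∃ f : ℕ → (Fin d → ℤ), f 0 = y ∧ f m = v ∧ ∀ t < m, stepRel d F M (f t) (f (t+1))) :
    ∃ g : ℕ → (Fin d → ℤ), g 0 = x ∧ g (m+1) = v ∧ ∀ t < m+1, stepRel d F M (g t) (g (t+1)) := by
  obtain ⟨f, hf0, hfm, hstep⟩ := hf
  refine ⟨fun t => if t = 0 then x else f (t - 1), by simp, by simp [hfm], ?_⟩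
  intro t ht
  match t with
  | 0 => simpa [hf0] using hxy
  | (s+1) => simpa using hstep s (by omega)

lemma sum_peel2 {d : ℕ} (p q : Fin d) (hpq : p ≠ q) (g g' : Fin d → ℕ)
    (h : ∀ j, j ≠ p → j ≠ q → g' j = g j) :
    (∑ j, g' j) + (g p + g q) = (∑ j, g j) + (g' p + g' q) := by
  have hq : q ∈ Finset.univ.erase p := Finset.mem_erase.mpr ⟨hpq.symm, Finset.mem_univ q⟩
  have e1 : ∀ (k : Fin d → ℕ), (∑ j, k j) = k p + (k q + ∑ j ∈ (Finset.univ.erase p).erase q, k j) := by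
    intro k
    rw [Finset.add_sum_erase _ k hq, Finset.add_sum_erase _ k (Finset.mem_univ p)]
  have e2 : ∑ j ∈ (Finset.univ.erase p).erase q, g' j = ∑ j ∈ (Finset.univ.erase p).erase q, g j := by
    apply Finset.sum_congr rfl
    intro j hj
    simp only [Finset.mem_erase] at hj
    exact h j hj.2.1 hj.1
  rw [e1 g', e1 g, e2]; omega

lemma move_coords {d : ℕ} (hd : 2 < d) (p q : Fin d)
    (hp : p ≠ ⟨0, Nat.zero_lt_of_lt hd⟩) (hq : q ≠ ⟨0, Nat.zero_lt_of_lt hd⟩) (hpq : p ≠ q) (w : Fin d → ℤ)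
    (hw : ∃ k : Fin d, k ≠ ⟨0, Nat.zero_lt_of_lt hd⟩ ∧
      w = (fun j => if j = (⟨0, Nat.zero_lt_of_lt hd⟩ : Fin d) then (1:ℤ) else 0) -
          (fun j => if j = k then 1 else 0)) :
    (w p).natAbs + (w q).natAbs ≤ 1 := by
  obtain ⟨k, hk, rfl⟩ := hw
  simp only [Pi.sub_apply]
  rw [if_neg hp, if_neg hq]
  rcases eq_or_ne k p with rfl | h1
  · rw [if_pos rfl, if_neg (Ne.symm hpq)]
    simp
  · rw [if_neg (Ne.symm h1)]
    rcases eq_or_ne k q with rfl | h2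
    · rw [if_pos rfl]; simp
    · rw [if_neg (Ne.symm h2)]; simp

lemma mem_F_move {d : ℕ} (i : ℕ) (F : Set (Fin d → ℤ))
    (hF : F = {u | (∀ j, 0 ≤ u j) ∧ (∑ j, u j) = (i : ℤ)})
    (x : Fin d → ℤ) (hx : x ∈ F) (p q : Fin d) (hpq : p ≠ q) (hq : 1 ≤ x q) :
    (fun j => x j + (if j = p then 1 else 0) - (if j = q then 1 else 0)) ∈ F := by
  rw [hF] at hx ⊢
  obtain ⟨hx1, hx2⟩ := hx
  constructor
  · intro j
    have h1 := hx1 j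
    show 0 ≤ x j + (if j = p then 1 else 0) - (if j = q then 1 else 0)
    by_cases hjp : j = p
    · rw [if_pos hjp, if_neg (hjp ▸ hpq)]
      omega
    · by_cases hjq : j = q
      · rw [if_neg hjp, if_pos hjq, hjq]
        omega
      · rw [if_neg hjp, if_neg hjq]
        omega
  · simp [Finset.sum_add_distrib, Finset.sum_sub_distrib, Finset.sum_ite_eq', hx2]

lemma l1_move {d : ℕ} (p q : Fin d) (hpq : p ≠ q) (x y v : Fin d → ℤ)
    (hy : ∀ j, y j = x j + (if j = p then 1 else 0) - (if j = q then 1 else 0))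
    (hp : x p < v p) (hq : v q < x q) :
    (∑ j, (y j - v j).natAbs) + 2 = ∑ j, (x j - v j).natAbs := by
  have key := sum_peel2 p q hpq (fun j => (x j - v j).natAbs)
    (fun j => (y j - v j).natAbs)
    (by intro j hjp hjq; show (y j - v j).natAbs = (x j - v j).natAbs; rw [hy j, if_neg hjp, if_neg hjq]; ring_nf)
  have hp' := hy p
  rw [if_pos rfl, if_neg hpq] at hp'
  have hq' := hy q
  rw [if_neg (Ne.symm hpq), if_pos rfl] at hq'
  have e1 : (y p - v p).natAbs + 1 = (x p - v p).natAbs := by omega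
  have e2 : (y q - v q).natAbs + 1 = (x q - v q).natAbs := by omega
  beta_reduce at key
  omega

lemma exists_path {d : ℕ} (hd : 2 < d) (i : ℕ)
    (F : Set (Fin d → ℤ))
    (hF : F = {u | (∀ j, 0 ≤ u j) ∧ (∑ j, u j) = (i : ℤ)})
    (Mset : Set (Fin d → ℤ))
    (hM : Mset = {v | ∃ k : Fin d, k ≠ ⟨0, Nat.zero_lt_of_lt hd⟩ ∧
      v = (fun j => if j = ⟨0, Nat.zero_lt_of_lt hd⟩ then 1 else 0) - (fun j => if j = k then 1 else 0)}) :
    ∀ n : ℕ, ∀ x v : Fin d → ℤ, x ∈ F → v ∈ F → (∑ j, (x j - v j).natAbs) ≤ n →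
    ∃ m ≤ n, ∃ f : ℕ → (Fin d → ℤ), f 0 = x ∧ f m = v ∧
      ∀ t < m, stepRel d F Mset (f t) (f (t+1)) := by
  intro n
  induction n using Nat.strong_induction_on with
  | _ n ih =>
  intro x v hx hv hsum
  by_cases hxv : x = v
  · exact ⟨0, Nat.zero_le n, fun _ => v, by simp [hxv], rfl, fun t ht => absurd ht (Nat.not_lt_zero t)⟩
  have hxm := hx; have hvm := hv
  rw [hF] at hxm hvm
  have hne : ∃ j, x j ≠ v j := Function.ne_iff.mp hxv
  have hA : ∃ a, v a < x a := by
    by_contra h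
    push_neg at h
    obtain ⟨j0, hj0⟩ := hne
    have hlt : ∑ j, x j < ∑ j, v j :=
      Finset.sum_lt_sum (fun j _ => h j) ⟨j0, Finset.mem_univ _, lt_of_le_of_ne (h j0) hj0⟩
    rw [hxm.2, hvm.2] at hlt
    exact lt_irrefl _ hlt
  have hB : ∃ b, x b < v b := by
    by_contra h
    push_neg at h
    obtain ⟨j0, hj0⟩ := hne
    have hlt : ∑ j, v j < ∑ j, x j :=
      Finset.sum_lt_sum (fun j _ => h j) ⟨j0, Finset.mem_univ _, lt_of_le_of_ne (h j0) (Ne.symm hj0)⟩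
    rw [hxm.2, hvm.2] at hlt
    exact lt_irrefl _ hlt
  obtain ⟨a, ha⟩ := hA
  obtain ⟨b, hb⟩ := hB
  have hab : a ≠ b := by intro h; rw [h] at ha; omega
  have hsub : ∑ j ∈ ({a, b} : Finset (Fin d)), (x j - v j).natAbs ≤ ∑ j, (x j - v j).natAbs :=
    Finset.sum_le_sum_of_subset (Finset.subset_univ _)
  rw [Finset.sum_pair hab] at hsub
  have h2n : 2 ≤ n := by omega
  set z : Fin d := ⟨0, by omega⟩ with hzdef
  have hva := hvm.1 a
  have hxb := hxm.1 b
  have hvz := hvm.1 z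
  have hxz := hxm.1 z
  rcases lt_trichotomy (x z) (v z) with hz | hz | hz
  · -- x z < v z : move a unit from a to z
    have haz : a ≠ z := by intro h; rw [h] at ha; omega
    set y : Fin d → ℤ := fun j => x j + (if j = z then 1 else 0) - (if j = a then 1 else 0) with hydef
    have hy : ∀ j, y j = x j + (if j = z then 1 else 0) - (if j = a then 1 else 0) := fun j => rfl
    have hyF : y ∈ F := mem_F_move i F hF x hx z a (Ne.symm haz) (by omega)
    have hstep : stepRel d F Mset x y := by
      refine ⟨hx, hyF, Or.inl ?_⟩
      rw [hM]
      refine ⟨a, haz, ?_⟩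
      funext j
      show y j - x j = (if j = z then (1:ℤ) else 0) - (if j = a then 1 else 0)
      rw [hy j]; ring
    have hl1 := l1_move z a (Ne.symm haz) x y v hy hz ha
    obtain ⟨m, hm, f, hf0, hfm, hfs⟩ := ih (n-1) (by omega) y v hyF hv (by omega)
    obtain ⟨g, hg⟩ := path_cons hstep ⟨f, hf0, hfm, hfs⟩
    exact ⟨m+1, by omega, g, hg⟩
  · -- x z = v z : two moves, from a to z then z to b
    have haz : a ≠ z := by intro h; rw [h] at ha; omega
    have hbz : b ≠ z := by intro h; rw [h] at hb; omega
    set y1 : Fin d → ℤ := fun j => x j + (if j = z then 1 else 0) - (if j = a then 1 else 0) with hy1def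
    have hy1 : ∀ j, y1 j = x j + (if j = z then 1 else 0) - (if j = a then 1 else 0) := fun j => rfl
    have hy1F : y1 ∈ F := mem_F_move i F hF x hx z a (Ne.symm haz) (by omega)
    have hstep1 : stepRel d F Mset x y1 := by
      refine ⟨hx, hy1F, Or.inl ?_⟩
      rw [hM]
      refine ⟨a, haz, ?_⟩
      funext j
      show y1 j - x j = (if j = z then (1:ℤ) else 0) - (if j = a then 1 else 0)
      rw [hy1 j]; ring
    have hy1z : y1 z = x z + 1 := by rw [hy1 z, if_pos rfl, if_neg (Ne.symm haz)]; ring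
    set y2 : Fin d → ℤ := fun j => y1 j + (if j = b then 1 else 0) - (if j = z then 1 else 0) with hy2def
    have hy2 : ∀ j, y2 j = y1 j + (if j = b then 1 else 0) - (if j = z then 1 else 0) := fun j => rfl
    have hy2F : y2 ∈ F := mem_F_move i F hF y1 hy1F b z hbz (by omega)
    have hstep2 : stepRel d F Mset y1 y2 := by
      refine ⟨hy1F, hy2F, Or.inr ?_⟩
      rw [hM]
      refine ⟨b, hbz, ?_⟩
      funext j
      show y1 j - y2 j = (if j = z then (1:ℤ) else 0) - (if j = b then 1 else 0)
      rw [hy2 j]; ring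
    have hy2x : ∀ j, y2 j = x j + (if j = b then 1 else 0) - (if j = a then 1 else 0) := by
      intro j
      rw [hy2 j, hy1 j]; ring
    have hl1 := l1_move b a (Ne.symm hab) x y2 v hy2x hb ha
    obtain ⟨m, hm, f, hf0, hfm, hfs⟩ := ih (n-2) (by omega) y2 v hy2F hv (by omega)
    obtain ⟨g, hg⟩ := path_cons hstep1 (path_cons hstep2 ⟨f, hf0, hfm, hfs⟩)
    exact ⟨m+1+1, by omega, g, hg⟩
  · -- v z < x z : move a unit from z to b
    have hbz : b ≠ z := by intro h; rw [h] at hb; omega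
    set y : Fin d → ℤ := fun j => x j + (if j = b then 1 else 0) - (if j = z then 1 else 0) with hydef
    have hy : ∀ j, y j = x j + (if j = b then 1 else 0) - (if j = z then 1 else 0) := fun j => rfl
    have hyF : y ∈ F := mem_F_move i F hF x hx b z hbz (by omega)
    have hstep : stepRel d F Mset x y := by
      refine ⟨hx, hyF, Or.inr ?_⟩
      rw [hM]
      refine ⟨b, hbz, ?_⟩
      funext j
      show x j - y j = (if j = z then (1:ℤ) else 0) - (if j = b then 1 else 0)
      rw [hy j]; ring
    have hl1 := l1_move b z hbz x y v hy hb hz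
    obtain ⟨m, hm, f, hf0, hfm, hfs⟩ := ih (n-1) (by omega) y v hyF hv (by omega)
    obtain ⟨g, hg⟩ := path_cons hstep ⟨f, hf0, hfm, hfs⟩
    exact ⟨m+1, by omega, g, hg⟩

lemma path_lower {d : ℕ} (hd : 2 < d) (i : ℕ)
    (F Mset : Set (Fin d → ℤ))
    (hM : Mset = {v | ∃ k : Fin d, k ≠ ⟨0, Nat.zero_lt_of_lt hd⟩ ∧
      v = (fun j => if j = ⟨0, Nat.zero_lt_of_lt hd⟩ then 1 else 0) - (fun j => if j = k then 1 else 0)})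
    (p q : Fin d) (hp : p ≠ ⟨0, Nat.zero_lt_of_lt hd⟩) (hq : q ≠ ⟨0, Nat.zero_lt_of_lt hd⟩) (hpq : p ≠ q) :
    ∀ n : ℕ, ∀ f : ℕ → (Fin d → ℤ), (∀ t < n, stepRel d F Mset (f t) (f (t+1))) →
    (f 0 p).natAbs + (f 0 q - i).natAbs ≤ n + ((f n p).natAbs + (f n q - i).natAbs) := by
  intro n
  induction n with
  | zero => intro f _; omega
  | succ n ihn =>
    intro f hf
    have h1 := ihn f (fun t ht => hf t (by omega))
    obtain ⟨-, -, hxy | hxy⟩ := hf n (by omega)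
    · rw [hM] at hxy
      have h2 := move_coords hd p q hp hq hpq _ hxy
      simp only [Pi.sub_apply] at h2
      omega
    · rw [hM] at hxy
      have h2 := move_coords hd p q hp hq hpq _ hxy
      simp only [Pi.sub_apply] at h2
      omega

end Stmt11Aux

/-- For `d > 2` the diameter of `𝓕_{A_d,i}(𝓜_d)` equals `2i`: any two fiber elements are at
graph distance at most their ℓ¹-distance, the maximal ℓ¹-distance in the fiber is `2i`, it is
attained, and the diameter equals `2i`. -/
theorem stmt11 (d : ℕ) (hd : 2 < d) (i : ℕ)
    (F : Set (Fin d → ℤ))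
    (hF : F = {u | (∀ j, 0 ≤ u j) ∧ (∑ j, u j) = (i : ℤ)})
    (Mset : Set (Fin d → ℤ))
    (hM : Mset = {v | ∃ k : Fin d, k ≠ ⟨0, by omega⟩ ∧
      v = (fun j => if j = ⟨0, by omega⟩ then 1 else 0) - (fun j => if j = k then 1 else 0)}) :
    (∀ u ∈ F, ∀ v ∈ F, walkDist d F Mset u v ≤ ∑ j, (u j - v j).natAbs) ∧
    (∀ u ∈ F, ∀ v ∈ F, (∑ j, (u j - v j).natAbs) ≤ 2 * i) ∧
    (∃ u ∈ F, ∃ v ∈ F, (∑ j, (u j - v j).natAbs) = 2 * i) ∧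
    walkDiam d F Mset = 2 * i := by
  have hpath := Stmt11Aux.exists_path hd i F hF Mset hM
  have part1 : ∀ u ∈ F, ∀ v ∈ F, walkDist d F Mset u v ≤ ∑ j, (u j - v j).natAbs := by
    intro u hu v hv
    obtain ⟨m, hm, f, h0, h1, h2⟩ := hpath _ u v hu hv le_rfl
    exact le_trans (Nat.sInf_le ⟨f, h0, h1, h2⟩) hm
  have part2 : ∀ u ∈ F, ∀ v ∈ F, (∑ j, (u j - v j).natAbs) ≤ 2 * i := by
    intro u hu v hv
    rw [hF] at hu hv
    have key : ((∑ j, (u j - v j).natAbs : ℕ) : ℤ) ≤ 2 * i := by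
      push_cast [Int.natCast_natAbs]
      calc ∑ j, |u j - v j| ≤ ∑ j, (u j + v j) := by
            apply Finset.sum_le_sum
            intro j _
            have h1 := hu.1 j
            have h2 := hv.1 j
            rw [abs_le]
            omega
        _ = 2 * i := by rw [Finset.sum_add_distrib, hu.2, hv.2]; ring
    exact_mod_cast key
  set o1 : Fin d := ⟨1, by omega⟩ with ho1def
  set o2 : Fin d := ⟨2, by omega⟩ with ho2def
  have ho12 : o1 ≠ o2 := by simp [ho1def, ho2def, Fin.ext_iff]
  have ho1z : o1 ≠ (⟨0, by omega⟩ : Fin d) := by simp [ho1def, Fin.ext_iff]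
  have ho2z : o2 ≠ (⟨0, by omega⟩ : Fin d) := by simp [ho2def, Fin.ext_iff]
  set ustar : Fin d → ℤ := fun j => if j = o1 then (i:ℤ) else 0 with hustar
  set vstar : Fin d → ℤ := fun j => if j = o2 then (i:ℤ) else 0 with hvstar
  have hus : ustar ∈ F := by
    rw [hF]
    constructor
    · intro j
      show (0:ℤ) ≤ if j = o1 then (i:ℤ) else 0
      by_cases h : j = o1 <;> simp [h]
    · show (∑ j, if j = o1 then (i:ℤ) else 0) = (i:ℤ)
      simp [Finset.sum_ite_eq']
  have hvs : vstar ∈ F := by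
    rw [hF]
    constructor
    · intro j
      show (0:ℤ) ≤ if j = o2 then (i:ℤ) else 0
      by_cases h : j = o2 <;> simp [h]
    · show (∑ j, if j = o2 then (i:ℤ) else 0) = (i:ℤ)
      simp [Finset.sum_ite_eq']
  have hl1star : (∑ j, (ustar j - vstar j).natAbs) = 2 * i := by
    have hpt : ∀ j, (ustar j - vstar j).natAbs = (if j = o1 then i else 0) + (if j = o2 then i else 0) := by
      intro j
      show ((if j = o1 then (i:ℤ) else 0) - (if j = o2 then (i:ℤ) else 0)).natAbs = _
      by_cases h1 : j = o1
      · subst h1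
        simp [ho12]
      · by_cases h2 : j = o2 <;> simp [h1, h2, Ne.symm ho12]
    rw [Finset.sum_congr rfl (fun j _ => hpt j), Finset.sum_add_distrib]
    simp [Finset.sum_ite_eq']
    ring
  have hustar1 : ustar o1 = (i:ℤ) := by show (if o1 = o1 then (i:ℤ) else 0) = i; rw [if_pos rfl]
  have hustar2 : ustar o2 = 0 := by show (if o2 = o1 then (i:ℤ) else 0) = 0; rw [if_neg (Ne.symm ho12)]
  have hvstar1 : vstar o1 = 0 := by show (if o1 = o2 then (i:ℤ) else 0) = 0; rw [if_neg ho12]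
  have hvstar2 : vstar o2 = (i:ℤ) := by show (if o2 = o2 then (i:ℤ) else 0) = i; rw [if_pos rfl]
  have hdstar : walkDist d F Mset ustar vstar = 2 * i := by
    apply le_antisymm
    · exact le_trans (part1 ustar hus vstar hvs) (le_of_eq hl1star)
    · obtain ⟨m, hm, f, h0, h1, h2⟩ := hpath _ ustar vstar hus hvs (le_of_eq hl1star)
      rw [walkDist]
      refine le_csInf ⟨m, f, h0, h1, h2⟩ ?_
      rintro nn ⟨f, h0, h1, h2⟩
      have := Stmt11Aux.path_lower hd i F Mset hM o1 o2 ho1z ho2z ho12 nn f h2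
      rw [h0, h1, hustar1, hustar2, hvstar1, hvstar2] at this
      omega
  refine ⟨part1, part2, ⟨ustar, hus, vstar, hvs, hl1star⟩, ?_⟩
  have hboundD : ∀ nn ∈ {n : ℕ | ∃ u ∈ F, ∃ v ∈ F, n = walkDist d F Mset u v}, nn ≤ 2*i := by
    rintro nn ⟨u, hu, v, hv, rfl⟩
    exact (part1 u hu v hv).trans (part2 u hu v hv)
  have hmemD : 2 * i ∈ {n : ℕ | ∃ u ∈ F, ∃ v ∈ F, n = walkDist d F Mset u v} :=
    ⟨ustar, hus, vstar, hvs, hdstar.symm⟩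
  exact le_antisymm (csSup_le ⟨_, hmemD⟩ hboundD) (le_csSup ⟨2*i, hboundD⟩ hmemD)
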